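/- Let F be a complete discretely valued field of characteristic zero with residue field of characteristic p, containing an element x of its valuation ring with 0 < |x − 1| < 1. Then there exists a nonnegative integer m₀ such that for every positive integer m and every element x_m of an algebraic closure of F with x_m^{p^m} = x but x_m^{p^{m-1}} ≠ x (for any choice of p^{m-1}-th root relation, i.e., x_m is a p^m-th root of x of exact order), the degree satisfies p^{m−m₀} ≤ [F(x_m):F] ≤ p^m. -/

import Mathlib

open Multiplicative Finset

section helpers

variable {K Γ : Type*} [Field K] [LinearOrderedCommGroupWithZero Γ]

lemma val_natCast_le_one (w : Valuation K Γ) (n : ℕ) : w (n : K) ≤ 1 := by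
  induction n with
  | zero => simp
  | succ k ih =>
      push_cast
      refine le_trans (w.map_add _ _) (max_le ih ?_)
      simp

end helpers

section extension

variable {F : Type*} [Field F] [Valued F (WithZero (Multiplicative ℤ))]

/-- Extension of the valuation to the algebraic closure: there is a valuation subring `O`
of `K := AlgebraicClosure F` whose valuation is compatible with `Valued.v` on `F`. -/
lemma exists_compatible_valuationSubring (K : Type*) [Field K] [Algebra F K] :
    ∃ O : ValuationSubring K,
      ∀ c d : F, O.valuation (algebraMap F K c) ≤ O.valuation (algebraMap F K d) ↔
        Valued.v c ≤ Valued.v d := by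
  classical
  set v : Valuation F (WithZero (Multiplicative ℤ)) := Valued.v
  set φ := algebraMap F K
  have hφinj : Function.Injective φ := (algebraMap F K).injective
  set A : LocalSubring K := LocalSubring.map φ v.valuationSubring.toLocalSubring with hA
  obtain ⟨O, hle⟩ := A.exists_le_valuationSubring
  obtain ⟨hsub, hloc⟩ := hle
  set w := O.valuation
  have hAmem : ∀ c : F, v c ≤ 1 → φ c ∈ A.toSubring := by
    intro c hc
    exact ⟨c, hc, rfl⟩
  have T1 : ∀ c : F, v c ≤ 1 → w (φ c) ≤ 1 := by
    intro c hc
    exact (O.valuation_le_one_iff _).mpr (hsub (hAmem c hc))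
  have Tb : ∀ c : F, v c < 1 → w (φ c) < 1 := by
    intro c hc
    rcases lt_or_eq_of_le (T1 c hc.le) with h | h
    · exact h
    exfalso
    have hφc0 : φ c ≠ 0 := by
      intro h0
      rw [h0, w.map_zero] at h
      exact zero_ne_one h
    have hmemA : φ c ∈ A.toSubring := hAmem c hc.le
    have hinv1 : w ((φ c)⁻¹) = 1 := by rw [map_inv₀, h, inv_one]
    have hinvO : (φ c)⁻¹ ∈ O := O.mem_of_valuation_le_one _ hinv1.le
    have hunit : IsUnit (Subring.inclusion hsub (⟨φ c, hmemA⟩ : A.toSubring)) := by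
      refine isUnit_iff_exists_inv.mpr ⟨⟨(φ c)⁻¹, hinvO⟩, ?_⟩
      exact Subtype.ext (mul_inv_cancel₀ hφc0)
    have hunitA : IsUnit (⟨φ c, hmemA⟩ : A.toSubring) := hloc.map_nonunit _ hunit
    obtain ⟨u, hu⟩ := hunitA
    have hmul : (u : A.toSubring) * (↑u⁻¹ : A.toSubring) = 1 := u.mul_inv
    obtain ⟨d, hd, hdeq⟩ := (↑u⁻¹ : A.toSubring).2
    have hval : φ c * φ d = 1 := by
      have := congrArg (Subtype.val) hmul
      rw [hu] at this
      simpa [hdeq] using this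
    have hcd : c * d = 1 := hφinj (by rw [_root_.map_mul, _root_.map_one]; exact hval)
    have : v c * v d = 1 := by rw [← v.map_mul, hcd, v.map_one]
    have hlt : v c * v d < 1 := lt_of_le_of_lt (mul_le_of_le_one_right' hd) hc
    rw [this] at hlt
    exact lt_irrefl _ hlt
  have T1' : ∀ c : F, w (φ c) ≤ 1 → v c ≤ 1 := by
    intro c hc
    by_contra hcon
    push_neg at hcon
    have hc0 : c ≠ 0 := by
      intro h0; rw [h0, v.map_zero] at hcon; exact absurd hcon (by simp)
    have hinv : v c⁻¹ < 1 := by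
      rw [map_inv₀]
      exact inv_lt_one_of_one_lt₀ hcon
    have hwinv : w (φ c⁻¹) < 1 := Tb _ hinv
    have : w (φ c) * w (φ c⁻¹) = 1 := by
      rw [← w.map_mul, ← _root_.map_mul, mul_inv_cancel₀ hc0, _root_.map_one, w.map_one]
    have hlt : w (φ c) * w (φ c⁻¹) < 1 :=
      lt_of_le_of_lt (mul_le_of_le_one_left' hc) hwinv
    rw [this] at hlt
    exact lt_irrefl _ hlt
  refine ⟨O, fun c d => ?_⟩
  rcases eq_or_ne d 0 with rfl | hd0
  · rw [_root_.map_zero, w.map_zero, v.map_zero, le_zero_iff, le_zero_iff,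
      Valuation.zero_iff, Valuation.zero_iff, map_eq_zero]
  · have hφd0 : φ d ≠ 0 := fun h => hd0 (hφinj (by rw [h, _root_.map_zero]))
    have hwd0 : w (φ d) ≠ 0 := by rwa [ne_eq, Valuation.zero_iff]
    have hvd0 : v d ≠ 0 := by rwa [ne_eq, Valuation.zero_iff]
    constructor
    · intro h
      have : w (φ (c / d)) ≤ 1 := by
        rw [map_div₀, map_div₀]
        exact div_le_one_of_le₀ h zero_le'
      have := T1' _ this
      rw [map_div₀] at this
      rwa [div_le_one₀ (lt_of_le_of_ne zero_le' (Ne.symm hvd0))] at this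
    · intro h
      have : v (c / d) ≤ 1 := by
        rw [map_div₀]
        exact div_le_one_of_le₀ h zero_le'
      have := T1 _ this
      rw [map_div₀, map_div₀] at this
      rwa [div_le_one₀ (lt_of_le_of_ne zero_le' (Ne.symm hwd0))] at this

end extension

section zm

lemma exists_nat_of_lt_one (V : WithZero (Multiplicative ℤ)) (h0 : V ≠ 0) (h1 : V < 1) :
    ∃ n : ℕ, 0 < n ∧
      V = ((Multiplicative.ofAdd (-(n : ℤ)) : Multiplicative ℤ) : WithZero (Multiplicative ℤ)) := by
  set γ := WithZero.unzero h0 with hγdef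
  have hcoe : (γ : WithZero (Multiplicative ℤ)) = V := WithZero.coe_unzero h0
  have hγ1 : γ < 1 := by
    rw [← WithZero.coe_lt_coe, hcoe, WithZero.coe_one]
    exact h1
  have htoAdd : γ.toAdd < 0 := Multiplicative.toAdd_lt.mpr hγ1
  refine ⟨(-γ.toAdd).toNat, by omega, ?_⟩
  rw [← hcoe]
  congr 1
  have : (-(((-γ.toAdd).toNat : ℤ))) = γ.toAdd := by omega
  rw [this, ofAdd_toAdd]

lemma zm_pow (n j : ℕ) :
    ((Multiplicative.ofAdd (-(n : ℤ)) : Multiplicative ℤ) : WithZero (Multiplicative ℤ)) ^ j =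
      ((Multiplicative.ofAdd (-((j * n : ℕ) : ℤ)) : Multiplicative ℤ) :
        WithZero (Multiplicative ℤ)) := by
  rw [← WithZero.coe_pow]
  congr 1
  rw [← ofAdd_nsmul]
  congr 1
  push_cast
  ring

lemma zm_le (n k : ℕ) :
    ((Multiplicative.ofAdd (-(n : ℤ)) : Multiplicative ℤ) : WithZero (Multiplicative ℤ)) ≤
      ((Multiplicative.ofAdd (-(k : ℤ)) : Multiplicative ℤ) : WithZero (Multiplicative ℤ)) ↔
        k ≤ n := by
  rw [WithZero.coe_le_coe, Multiplicative.ofAdd_le]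
  omega

end zm

section helpers2

variable {K Γ : Type*} [Field K] [LinearOrderedCommGroupWithZero Γ]

lemma pow_eq_one_imp {g : Γ} {n : ℕ} (hn : n ≠ 0) (h : g ^ n = 1) : g = 1 := by
  rcases lt_trichotomy g 1 with hlt | he | hgt
  · exact absurd h (pow_lt_one₀ zero_le' hlt hn).ne
  · exact he
  · exact absurd h (one_lt_pow₀ hgt hn).ne'

lemma sum_eq_zero_forall_of_distinct_val (w : Valuation K Γ) {ι : Type*} (s : Finset ι)
    (f : ι → K)
    (hdist : ∀ i ∈ s, ∀ j ∈ s, i ≠ j → f i ≠ 0 → f j ≠ 0 → w (f i) ≠ w (f j))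
    (hsum : ∑ i ∈ s, f i = 0) : ∀ i ∈ s, f i = 0 := by
  classical
  by_contra hcon
  push_neg at hcon
  obtain ⟨i₁, hi₁s, hi₁⟩ := hcon
  set s' := s.filter (fun i => f i ≠ 0) with hs'
  have hsub : s' ⊆ s := Finset.filter_subset _ _
  have hsum' : ∑ i ∈ s', f i = 0 := by
    rw [hs', Finset.sum_filter_ne_zero]; exact hsum
  have hne : s'.Nonempty := ⟨i₁, Finset.mem_filter.mpr ⟨hi₁s, hi₁⟩⟩
  obtain ⟨i₀, hi₀, hmax⟩ := s'.exists_max_image (fun i => w (f i)) hne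
  have hfi₀ : f i₀ ≠ 0 := (Finset.mem_filter.mp hi₀).2
  have h1 : ∑ i ∈ s'.erase i₀, f i + f i₀ = 0 := by
    rw [Finset.sum_erase_add _ _ hi₀]; exact hsum'
  have h2 : w (∑ i ∈ s'.erase i₀, f i) < w (f i₀) := by
    apply w.map_sum_lt (by simpa using hfi₀)
    intro i hi
    have hi' := Finset.mem_of_mem_erase hi
    have hine : i ≠ i₀ := Finset.ne_of_mem_erase hi
    exact lt_of_le_of_ne (hmax i hi')
      (hdist i (hsub hi') i₀ (hsub hi₀) hine (Finset.mem_filter.mp hi').2 hfi₀)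
  have h3 : f i₀ = -∑ i ∈ s'.erase i₀, f i := by
    rw [eq_neg_iff_add_eq_zero, add_comm]; exact h1
  rw [h3, w.map_neg] at h2
  exact absurd h2 (lt_irrefl _)

lemma val_one_add_pow_sub (w : Valuation K Γ) {p : ℕ} (hp : p.Prime) {k : ℕ} (hk : 0 < k)
    {t : K} (ht : w t ≤ 1) :
    w ((1 + t) ^ p ^ k - 1 - t ^ p ^ k) ≤ w (p : K) * w t := by
  set n := p ^ k with hn
  have hn1 : 0 < n := pow_pos hp.pos k
  have hexp : (1 + t) ^ n = ∑ i ∈ Finset.range (n + 1), t ^ i * ((n.choose i : K)) := by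
    rw [add_comm 1 t, add_pow]; simp
  have hident : (1 + t) ^ n - 1 - t ^ n = ∑ i ∈ Finset.Ico 1 n, t ^ i * (n.choose i : K) := by
    rw [hexp, Finset.range_eq_Ico, Finset.sum_Ico_succ_top (Nat.zero_le n),
      Finset.sum_eq_sum_Ico_succ_bot hn1]
    simp only [pow_zero, Nat.choose_zero_right, Nat.cast_one, mul_one, Nat.choose_self]
    ring
  rw [hident]
  apply w.map_sum_le
  intro i hi
  obtain ⟨hi1, hi2⟩ := Finset.mem_Ico.mp hi
  obtain ⟨d, hd⟩ := Nat.Prime.dvd_choose_pow hp (by omega : i ≠ 0) (by omega : i ≠ p ^ k)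
  have hcast : ((n.choose i : K)) = (p : K) * (d : K) := by
    rw [← hn] at hd
    rw [hd]; push_cast; ring
  have hterm : w (t ^ i * (n.choose i : K)) = (w t) ^ i * (w (p : K) * w (d : K)) := by
    rw [w.map_mul, w.map_pow, hcast, w.map_mul]
  rw [hterm]
  have h1 : (w t) ^ i ≤ w t := by
    rw [show i = 1 + (i - 1) by omega, pow_add, pow_one]
    exact mul_le_of_le_one_right' (pow_le_one' ht _)
  have h2 : w (p : K) * w (d : K) ≤ w (p : K) :=
    mul_le_of_le_one_right' (val_natCast_le_one w d)
  calc (w t) ^ i * (w (p : K) * w (d : K)) ≤ w t * w (p : K) :=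
        mul_le_mul' h1 h2
    _ = w (p : K) * w t := mul_comm _ _

end helpers2

/-- Let `F` be a complete discretely valued field of characteristic `0`
with residue characteristic `p` (i.e. `|p| < 1`), and `x ∈ F°` with `0 < |x − 1| < 1`.
Then there is `m₀ ≥ 0` such that for every `m ≥ 1` and every `p^m`-th root `y` of `x`
(in an algebraic closure) which is not a `p^{m−1}`-th root of `x`, one has
`p^{m−m₀} ≤ [F(y) : F] ≤ p^m`. -/
theorem stmt_9 (p : ℕ) (hp : p.Prime) (F : Type*) [Field F]
    [Valued F (WithZero (Multiplicative ℤ))] [CompleteSpace F] [CharZero F]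
    [IsDiscreteValuationRing
      ↥((Valued.v : Valuation F (WithZero (Multiplicative ℤ))).valuationSubring)]
    (hres : Valued.v (p : F) < 1)
    (x : F) (hx_int : Valued.v x ≤ 1)
    (hx1 : Valued.v (x - 1) < 1) (hx0 : Valued.v (x - 1) ≠ 0) :
    ∃ m₀ : ℕ, ∀ m : ℕ, 0 < m → ∀ y : AlgebraicClosure F,
      y ^ (p ^ m) = algebraMap F (AlgebraicClosure F) x →
      y ^ (p ^ (m - 1)) ≠ algebraMap F (AlgebraicClosure F) x →
      p ^ (m - m₀) ≤ Module.finrank F ↥(IntermediateField.adjoin F {y}) ∧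
        Module.finrank F ↥(IntermediateField.adjoin F {y}) ≤ p ^ m := by
  classical
  obtain ⟨O, hT⟩ := exists_compatible_valuationSubring (F := F) (AlgebraicClosure F)
  set K := AlgebraicClosure F with hK
  set φ := algebraMap F (AlgebraicClosure F) with hφ
  set v : Valuation F (WithZero (Multiplicative ℤ)) := Valued.v with hv
  set w := O.valuation with hw
  have hφinj : Function.Injective φ := φ.injective
  have hTs : ∀ c d : F, w (φ c) < w (φ d) ↔ v c < v d := by
    intro c d
    rw [← not_le, ← not_le, hT d c]
  have hx10 : x - 1 ≠ 0 := fun h => hx0 (by rw [h, v.map_zero])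
  have hxne1 : x ≠ 1 := fun h => hx10 (by rw [h, sub_self])
  have hvx : v x = 1 := by
    rcases lt_or_eq_of_le hx_int with h | h
    · exfalso
      have h1 : v (x - 1) = v (1 - x) := by
        rw [show x - 1 = -(1 - x) by ring, v.map_neg]
      rw [h1, v.map_one_sub_of_lt h] at hx1
      exact lt_irrefl _ hx1
    · exact h
  obtain ⟨a, ha1, hva⟩ := exists_nat_of_lt_one (v (x - 1)) hx0 hx1
  have hpF0 : (p : F) ≠ 0 := Nat.cast_ne_zero.mpr hp.ne_zero
  have hvp0 : v (p : F) ≠ 0 := by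
    rw [ne_eq, Valuation.zero_iff]; exact hpF0
  obtain ⟨e, he1, hve⟩ := exists_nat_of_lt_one (v (p : F)) hvp0 hres
  refine ⟨2 * a, ?_⟩
  intro m hm y hy1 _
  have hyint : IsIntegral F y := (Algebra.IsAlgebraic.isAlgebraic (R := F) y).isIntegral
  have hfin : FiniteDimensional F (IntermediateField.adjoin F {y}) :=
    IntermediateField.adjoin.finiteDimensional hyint
  have hrk : Module.finrank F (IntermediateField.adjoin F {y}) = (minpoly F y).natDegree :=
    IntermediateField.adjoin.finrank hyint
  have hpm0 : p ^ m ≠ 0 := (pow_pos hp.pos m).ne'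
  constructor
  case right =>
    rw [hrk]
    have hmono : (Polynomial.X ^ (p ^ m) - Polynomial.C x : Polynomial F).Monic :=
      Polynomial.monic_X_pow_sub_C x hpm0
    have haev : Polynomial.aeval y (Polynomial.X ^ (p ^ m) - Polynomial.C x) = 0 := by
      simp [hy1, sub_eq_zero]; rfl
    have hdeg := minpoly.degree_le_of_ne_zero F y hmono.ne_zero haev
    have h2 := Polynomial.natDegree_le_natDegree hdeg
    rwa [Polynomial.natDegree_X_pow_sub_C] at h2
  case left =>
  rcases le_or_gt m (2 * a) with hcase | hcase
  · rw [Nat.sub_eq_zero_of_le hcase, pow_zero]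
    exact Module.finrank_pos
  -- main case : m > 2a
  have hpcast : ((p : ℕ) : K) = φ ((p : ℕ) : F) := (map_natCast φ p).symm
  have hE1 : w (φ (p : F)) < 1 := by
    have h1 : v (p : F) < v 1 := by rwa [v.map_one]
    have := (hTs (p : F) 1).mpr h1
    rwa [map_one, w.map_one] at this
  have hE0 : w (φ (p : F)) ≠ 0 := by
    rw [ne_eq, Valuation.zero_iff]
    exact fun h => hpF0 (hφinj (by rw [h, map_zero]))
  have hA1 : w (φ (x - 1)) < 1 := by
    have h1 : v (x - 1) < v 1 := by rwa [v.map_one]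
    have := (hTs (x - 1) 1).mpr h1
    rwa [map_one, w.map_one] at this
  have hA0 : w (φ (x - 1)) ≠ 0 := by
    rw [ne_eq, Valuation.zero_iff]
    exact fun h => hx10 (hφinj (by rw [h, map_zero]))
  have hwx : w (φ x) = 1 := by
    have h1 : w (φ x) ≤ w (φ 1) := (hT x 1).mpr (by rw [v.map_one, hvx])
    have h2 : w (φ 1) ≤ w (φ x) := (hT 1 x).mpr (by rw [v.map_one, hvx])
    rw [map_one, w.map_one] at h1 h2
    exact le_antisymm h1 h2
  have hwy1 : w y = 1 := by
    apply pow_eq_one_imp hpm0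
    rw [← w.map_pow, hy1, hwx]
  have hyne1 : y ≠ 1 := by
    intro h
    apply hxne1
    apply hφinj
    rw [map_one]
    rw [h, one_pow] at hy1
    exact hy1.symm
  set μ := w (y - 1) with hμ
  have hμ0 : μ ≠ 0 := by
    rw [hμ, ne_eq, Valuation.zero_iff, sub_eq_zero]
    exact hyne1
  have hμle : μ ≤ 1 := by
    rw [hμ]
    refine le_trans (w.map_sub _ _) (max_le ?_ ?_)
    · rw [hwy1]
    · rw [w.map_one]
  have hμlt : μ < 1 := by
    have hbin := val_one_add_pow_sub w hp hm (t := y - 1) hμle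
    rw [show (1 : K) + (y - 1) = y by ring, hy1, hpcast] at hbin
    have hmax : w ((y - 1) ^ p ^ m) ≤ max (w (φ (x - 1))) (w (φ (p : F)) * μ) := by
      have hid : (y - 1) ^ p ^ m = (φ x - 1) - (φ x - 1 - (y - 1) ^ p ^ m) := by ring
      rw [hid]
      refine le_trans (w.map_sub _ _) (max_le_max ?_ hbin)
      rw [show φ x - 1 = φ (x - 1) by rw [map_sub, map_one]]
    rw [w.map_pow, ← hμ] at hmax
    by_contra hcon
    push_neg at hcon
    have h1 : (1 : O.ValueGroup) ≤ μ ^ p ^ m := by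
      calc (1 : O.ValueGroup) = 1 ^ p ^ m := (one_pow _).symm
        _ ≤ μ ^ p ^ m := pow_le_pow_left' hcon _
    have h2 : max (w (φ (x - 1))) (w (φ (p : F)) * μ) < 1 :=
      max_lt hA1 (lt_of_le_of_lt (mul_le_of_le_one_right' hμle) hE1)
    exact absurd (lt_of_le_of_lt (h1.trans hmax) h2) (lt_irrefl _)
  -- the chain
  have chain : ∀ j : ℕ, ∃ r s : ℕ, r + s = j ∧
      w (y ^ p ^ j - 1) ≤ (w (φ (p : F))) ^ r * μ ^ p ^ s := by
    intro j
    induction j with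
    | zero => exact ⟨0, 0, rfl, by simp [hμ]⟩
    | succ j ih =>
      obtain ⟨r, s, hrs, hb⟩ := ih
      have hty : w (y ^ p ^ j) = 1 := by rw [w.map_pow, hwy1, one_pow]
      have htle : w (y ^ p ^ j - 1) ≤ 1 := by
        refine le_trans (w.map_sub _ _) (max_le ?_ ?_)
        · rw [hty]
        · rw [w.map_one]
      have hstep := val_one_add_pow_sub w hp one_pos (t := y ^ p ^ j - 1) htle
      rw [pow_one, show (1 : K) + (y ^ p ^ j - 1) = y ^ p ^ j by ring, ← pow_mul,
        ← pow_succ, hpcast] at hstep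
      have hsplit : w (y ^ p ^ (j + 1) - 1) ≤
          max (w (φ (p : F)) * w (y ^ p ^ j - 1)) ((w (y ^ p ^ j - 1)) ^ p) := by
        have hid : y ^ p ^ (j + 1) - 1 =
            (y ^ p ^ (j + 1) - 1 - (y ^ p ^ j - 1) ^ p) + (y ^ p ^ j - 1) ^ p := by ring
        rw [hid]
        exact le_trans (w.map_add _ _) (max_le_max hstep (le_of_eq (w.map_pow _ _)))
      have hEpow : ∀ r' r'' : ℕ, r' ≤ r'' →
          (w (φ (p : F))) ^ r'' ≤ (w (φ (p : F))) ^ r' := by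
        intro r' r'' hr
        rw [show r'' = r' + (r'' - r') by omega, pow_add]
        exact mul_le_of_le_one_right' (pow_le_one' hE1.le _)
      rcases le_total ((w (y ^ p ^ j - 1)) ^ p) (w (φ (p : F)) * w (y ^ p ^ j - 1)) with hmx | hmx
      · refine ⟨r + 1, s, by omega, ?_⟩
        calc w (y ^ p ^ (j + 1) - 1) ≤ w (φ (p : F)) * w (y ^ p ^ j - 1) := by
              rw [max_eq_left hmx] at hsplit; exact hsplit
          _ ≤ w (φ (p : F)) * ((w (φ (p : F))) ^ r * μ ^ p ^ s) := mul_le_mul' (le_refl _) hb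
          _ = (w (φ (p : F))) ^ (r + 1) * μ ^ p ^ s := by rw [pow_succ', mul_assoc]
      · refine ⟨r, s + 1, by omega, ?_⟩
        calc w (y ^ p ^ (j + 1) - 1) ≤ (w (y ^ p ^ j - 1)) ^ p := by
              rw [max_eq_right hmx] at hsplit; exact hsplit
          _ ≤ ((w (φ (p : F))) ^ r * μ ^ p ^ s) ^ p := pow_le_pow_left' hb p
          _ = (w (φ (p : F))) ^ (r * p) * μ ^ (p ^ s * p) := by
              rw [mul_pow, ← pow_mul, ← pow_mul]
          _ ≤ (w (φ (p : F))) ^ r * μ ^ p ^ (s + 1) := by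
              rw [pow_succ]
              exact mul_le_mul' (hEpow r (r * p) (Nat.le_mul_of_pos_right r hp.pos)) (le_refl _)
  obtain ⟨r, s, hrs, hchain⟩ := chain m
  rw [hy1, show φ x - 1 = φ (x - 1) by rw [map_sub, map_one]] at hchain
  -- r ≤ a
  have hre : r * e ≤ a := by
    have h1 : w (φ (x - 1)) ≤ (w (φ (p : F))) ^ r :=
      le_trans hchain (mul_le_of_le_one_right' (pow_le_one' hμle _))
    have h2 : w (φ (x - 1)) ≤ w (φ ((p : F) ^ r)) := by
      rw [map_pow, w.map_pow]; exact h1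
    have h3 : v (x - 1) ≤ v ((p : F) ^ r) := (hT _ _).mp h2
    rw [v.map_pow, hva, hve, zm_pow] at h3
    exact (zm_le _ _).mp h3
  have hra : r ≤ a := le_trans (Nat.le_mul_of_pos_right r he1) hre
  have hsge : m - a ≤ s := by omega
  have hApow : w (φ (x - 1)) ≤ μ ^ p ^ (m - a) := by
    have h1 : w (φ (x - 1)) ≤ μ ^ p ^ s :=
      le_trans hchain (mul_le_of_le_one_left' (pow_le_one' hE1.le _))
    refine le_trans h1 ?_
    have hle' : p ^ (m - a) ≤ p ^ s := Nat.pow_le_pow_right hp.pos hsge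
    rw [show p ^ s = p ^ (m - a) + (p ^ s - p ^ (m - a)) by omega, pow_add]
    exact mul_le_of_le_one_right' (pow_le_one' hμle _)
  set N := p ^ (m - 2 * a) with hN
  -- distinctness
  have key : ∀ i j : ℕ, i < j → j - i < N → ∀ ci cj : F, ci ≠ 0 → cj ≠ 0 →
      w (φ ci) * μ ^ i ≠ w (φ cj) * μ ^ j := by
    intro i j hij hjiN ci cj hci hcj heq
    set k := j - i with hk
    have hk1 : 1 ≤ k := by omega
    have hwcj0 : w (φ cj) ≠ 0 := by
      rw [ne_eq, Valuation.zero_iff]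
      exact fun h => hcj (hφinj (by rw [h, map_zero]))
    have h2 : w (φ ci) = w (φ cj) * μ ^ k := by
      have h1 : w (φ ci) * μ ^ i = (w (φ cj) * μ ^ k) * μ ^ i := by
        rw [heq, mul_assoc, ← pow_add]
        congr 2
        omega
      exact mul_right_cancel₀ (pow_ne_zero i hμ0) h1
    have hμk : μ ^ k = w (φ (ci / cj)) := by
      rw [map_div₀, map_div₀, h2, mul_comm, mul_div_assoc, div_self hwcj0, mul_one]
    have hc0 : ci / cj ≠ 0 := div_ne_zero hci hcj
    have hwlt : w (φ (ci / cj)) < 1 := by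
      rw [← hμk]
      exact pow_lt_one₀ zero_le' hμlt (by omega)
    have hvlt : v (ci / cj) < 1 := by
      have h1 : w (φ (ci / cj)) < w (φ 1) := by rwa [map_one, w.map_one]
      have := (hTs _ _).mp h1
      rwa [v.map_one] at this
    have hv0 : v (ci / cj) ≠ 0 := by
      rw [ne_eq, Valuation.zero_iff]; exact hc0
    obtain ⟨n, hn1, hvn⟩ := exists_nat_of_lt_one _ hv0 hvlt
    set P := p ^ (m - a) with hP
    have hkey : w (φ ((x - 1) ^ k)) ≤ w (φ ((ci / cj) ^ P)) := by
      have hL : w (φ ((x - 1) ^ k)) = (w (φ (x - 1))) ^ k := by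
        rw [map_pow, w.map_pow]
      have hR : w (φ ((ci / cj) ^ P)) = (μ ^ k) ^ P := by
        rw [map_pow, w.map_pow, ← hμk]
      rw [hL, hR]
      calc (w (φ (x - 1))) ^ k ≤ (μ ^ P) ^ k := pow_le_pow_left' hApow k
        _ = (μ ^ k) ^ P := by rw [← pow_mul, ← pow_mul, mul_comm]
    have hvkey := (hT _ _).mp hkey
    rw [v.map_pow, v.map_pow, hva, hvn, zm_pow, zm_pow] at hvkey
    have hineq : P * n ≤ k * a := (zm_le _ _).mp hvkey
    have hPa : P ≤ P * n := Nat.le_mul_of_pos_right P hn1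
    have hka : k * a < P := by
      have h1 : k * a < N * a := (Nat.mul_lt_mul_right ha1).mpr hjiN
      have h2 : N * a ≤ N * p ^ a := Nat.mul_le_mul_left N (Nat.lt_pow_self (n := a) hp.one_lt).le
      have h3 : N * p ^ a = P := by
        rw [hN, hP, ← pow_add]
        congr 1
        omega
      omega
    omega
  -- linear independence
  have hy_mem : y ∈ IntermediateField.adjoin F {y} := IntermediateField.mem_adjoin_simple_self F y
  have hmem : ∀ i : ℕ, (y - 1) ^ i ∈ IntermediateField.adjoin F {y} := fun i =>
    pow_mem (sub_mem hy_mem (one_mem _)) i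
  have hy10 : (y - 1) ≠ 0 := sub_ne_zero.mpr hyne1
  have hliK : LinearIndependent F (fun i : Fin N => ((y - 1) ^ (i : ℕ) : K)) := by
    rw [Fintype.linearIndependent_iff]
    intro c hc
    have hsum : ∑ i : Fin N, φ (c i) * (y - 1) ^ (i : ℕ) = 0 := by
      rw [← hc]
      refine Finset.sum_congr rfl fun i _ => ?_
      rw [Algebra.smul_def]
    have hall := sum_eq_zero_forall_of_distinct_val w Finset.univ
      (fun i : Fin N => φ (c i) * (y - 1) ^ (i : ℕ)) ?_ hsum
    · intro i
      have h1 := hall i (Finset.mem_univ i)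
      rcases mul_eq_zero.mp h1 with h | h
      · exact hφinj (by rw [h, map_zero])
      · exact absurd h (pow_ne_zero _ hy10)
    · intro i _ j _ hij hfi hfj
      have hci : c i ≠ 0 := fun h => hfi (by simp [h])
      have hcj : c j ≠ 0 := fun h => hfj (by simp [h])
      have hwv : ∀ i : Fin N, w (φ (c i) * (y - 1) ^ (i : ℕ)) = w (φ (c i)) * μ ^ (i : ℕ) := by
        intro i'; rw [w.map_mul, w.map_pow, ← hμ]
      rw [hwv, hwv]
      rcases lt_or_gt_of_ne (show (i : ℕ) ≠ (j : ℕ) from fun h => hij (Fin.ext h)) with h | h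
      · exact key i j h (by omega) _ _ hci hcj
      · exact Ne.symm (key j i h (by omega) _ _ hcj hci)
  have hli : LinearIndependent F (fun i : Fin N =>
      (⟨(y - 1) ^ (i : ℕ), hmem i⟩ : IntermediateField.adjoin F {y})) := by
    apply LinearIndependent.of_comp (IntermediateField.adjoin F {y}).val.toLinearMap
    exact hliK
  have hcard := hli.fintype_card_le_finrank
  rwa [Fintype.card_fin] at hcard
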